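/- If {μ_k : 1 ≤ k ≤ m} come from an orthogonal UPB with ε/m = inf{Tr(μ₀σ) : σ ∈ S} and 0 < Nε/m < 1, then for the segment λ(t) = (1−t)D₀ + tρ(p) (ρ(p) as in the far-face construction with b = 1/p_max), λ(t) is inseparable whenever s₀[(N p_max − 1)/(N/m − 1)] < t ≤ 1, where s₀ = 1 − εN/m; moreover λ(t) has positive partial transposes, being a convex combination of PPT states. -/

import Mathlib

set_option maxHeartbeats 1000000
set_option linter.unusedSectionVars false


open Matrix
open scoped ComplexOrder

/-- The rank-one projection `|φ⟩⟨φ|`. -/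
def outer {n : Type*} [Fintype n] (φ : n → ℂ) : Matrix n n ℂ :=
  Matrix.vecMulVec φ (star φ)

/-- The set of separable densities on `ℂ^{d₁} ⊗ ℂ^{d₂}`. -/
def SepSet (d₁ d₂ : ℕ) : Set (Matrix (Fin d₁ × Fin d₂) (Fin d₁ × Fin d₂) ℂ) :=
  convexHull ℝ {M | ∃ (a : Fin d₁ → ℂ) (b : Fin d₂ → ℂ),
    star a ⬝ᵥ a = 1 ∧ star b ⬝ᵥ b = 1 ∧ M = outer (fun p => a p.1 * b p.2)}

/-- The partial transpose with respect to the second tensor factor. -/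
def ptrans {d₁ d₂ : ℕ} (M : Matrix (Fin d₁ × Fin d₂) (Fin d₁ × Fin d₂) ℂ) :
    Matrix (Fin d₁ × Fin d₂) (Fin d₁ × Fin d₂) ℂ :=
  fun p q => M (p.1, q.2) (q.1, p.2)


section aux
variable {n : Type*} [Fintype n] [DecidableEq n]

lemma star_dot (u v : n → ℂ) : star (star u ⬝ᵥ v) = star v ⬝ᵥ u := by
  simp [dotProduct, mul_comm]

lemma outer_conjTranspose (v : n → ℂ) : (outer v)ᴴ = outer v := by
  ext i j
  simp [outer, vecMulVec_apply, conjTranspose_apply, mul_comm]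

lemma outer_mulVec (v x : n → ℂ) : outer v *ᵥ x = (star v ⬝ᵥ x) • v := by
  ext i
  simp only [outer, mulVec, dotProduct, vecMulVec_apply, Pi.smul_apply, smul_eq_mul,
    Finset.sum_mul, Pi.star_apply]
  exact Finset.sum_congr rfl fun j _ => by ring

lemma posSemidef_outer (v : n → ℂ) : (outer v).PosSemidef := by
  refine .of_dotProduct_mulVec_nonneg (outer_conjTranspose v) fun x => ?_
  rw [outer_mulVec, dotProduct_smul]
  have h : star x ⬝ᵥ v = star (star v ⬝ᵥ x) := (star_dot v x).symm
  rw [smul_eq_mul, h]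
  exact mul_star_self_nonneg _

lemma trace_outer (v : n → ℂ) : trace (outer v) = star v ⬝ᵥ v := by
  simp [trace, outer, vecMulVec_apply, dotProduct, Matrix.diag, mul_comm]

lemma outer_mul_outer (u v : n → ℂ) :
    outer u * outer v = (star u ⬝ᵥ v) • Matrix.vecMulVec u (star v) := by
  ext i j
  simp only [outer, Matrix.mul_apply, vecMulVec_apply, Matrix.smul_apply, dotProduct,
    Pi.star_apply, smul_eq_mul, Finset.sum_mul]
  exact Finset.sum_congr rfl fun k _ => by ring

lemma trace_outer_mul_outer (u v : n → ℂ) :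
    trace (outer u * outer v) = (star u ⬝ᵥ v) * (star v ⬝ᵥ u) := by
  rw [outer_mul_outer, trace_smul, smul_eq_mul]
  congr 1
  simp [trace, vecMulVec_apply, dotProduct, Matrix.diag, mul_comm]

lemma posSemidef_real_smul {M : Matrix n n ℂ} (hM : M.PosSemidef) {r : ℝ} (hr : 0 ≤ r) :
    ((r : ℂ) • M).PosSemidef := by
  refine .of_dotProduct_mulVec_nonneg ?_ fun x => ?_
  · unfold Matrix.IsHermitian
    rw [conjTranspose_smul, hM.1, Complex.star_def, Complex.conj_ofReal]
  · rw [smul_mulVec, dotProduct_smul, smul_eq_mul]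
    exact mul_nonneg (by exact_mod_cast hr) (hM.dotProduct_mulVec_nonneg x)

lemma posSemidef_zero : (0 : Matrix n n ℂ).PosSemidef := by
  refine ⟨by simp [Matrix.IsHermitian], fun x => by simp⟩

end aux

section ptranslem
variable {d₁ d₂ : ℕ}

lemma ptrans_add (A B : Matrix (Fin d₁ × Fin d₂) (Fin d₁ × Fin d₂) ℂ) :
    ptrans (A + B) = ptrans A + ptrans B := rfl

lemma ptrans_sub (A B : Matrix (Fin d₁ × Fin d₂) (Fin d₁ × Fin d₂) ℂ) :
    ptrans (A - B) = ptrans A - ptrans B := rfl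

lemma ptrans_smul (c : ℂ) (A : Matrix (Fin d₁ × Fin d₂) (Fin d₁ × Fin d₂) ℂ) :
    ptrans (c • A) = c • ptrans A := rfl

lemma ptrans_one : ptrans (1 : Matrix (Fin d₁ × Fin d₂) (Fin d₁ × Fin d₂) ℂ) = 1 := by
  ext ⟨i, j⟩ ⟨k, l⟩
  simp only [ptrans, Matrix.one_apply, Prod.mk.injEq]
  by_cases h1 : i = k <;> by_cases h2 : j = l <;> simp_all [eq_comm]

lemma ptrans_sum {ι : Type*} (s : Finset ι)
    (f : ι → Matrix (Fin d₁ × Fin d₂) (Fin d₁ × Fin d₂) ℂ) :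
    ptrans (∑ i ∈ s, f i) = ∑ i ∈ s, ptrans (f i) := by
  ext p q
  simp only [Matrix.sum_apply, ptrans]

lemma ptrans_outer (a : Fin d₁ → ℂ) (c : Fin d₂ → ℂ) :
    ptrans (outer fun q : Fin d₁ × Fin d₂ => a q.1 * c q.2) =
      outer (fun q : Fin d₁ × Fin d₂ => a q.1 * star (c q.2)) := by
  ext ⟨i, j⟩ ⟨k, l⟩
  simp only [ptrans, outer, vecMulVec_apply, Pi.star_apply, star_mul', star_star]
  ring

end ptranslem

section factor
variable {d₁ d₂ : ℕ}

lemma dot_factor (a a' : Fin d₁ → ℂ) (c c' : Fin d₂ → ℂ) :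
    star (fun q : Fin d₁ × Fin d₂ => a q.1 * c q.2) ⬝ᵥ (fun q => a' q.1 * c' q.2) =
      (star a ⬝ᵥ a') * (star c ⬝ᵥ c') := by
  simp only [dotProduct, Pi.star_apply, star_mul']
  rw [Fintype.sum_prod_type, Finset.sum_mul_sum]
  exact Finset.sum_congr rfl fun i _ => Finset.sum_congr rfl fun j _ => by ring

end factor

/-- Frustum of inseparable PPT states from an orthogonal UPB: for
`λ(t) = (1-t)D₀ + tρ(p)` with `ρ(p)` the far-face density (`b = 1/p_max`),
`λ(t)` is an inseparable PPT state whenever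
`s₀ (N p_max - 1)/(N/m - 1) < t ≤ 1`, where `s₀ = 1 - εN/m`. -/
theorem stmt10 {d₁ d₂ m N : ℕ} (hN : N = d₁ * d₂) (hm : m < N) (hm0 : 0 < m)
    (α : Fin m → Fin d₁ → ℂ) (β : Fin m → Fin d₂ → ℂ)
    (φ : Fin m → Fin d₁ × Fin d₂ → ℂ)
    (hprod : ∀ k, φ k = fun p => α k p.1 * β k p.2)
    (horth : ∀ k l, star (φ k) ⬝ᵥ φ l = if k = l then 1 else 0)
    (hUPB : ∀ (a : Fin d₁ → ℂ) (b : Fin d₂ → ℂ),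
      (∀ k, star (fun p : Fin d₁ × Fin d₂ => a p.1 * b p.2) ⬝ᵥ φ k = 0) →
      (fun p : Fin d₁ × Fin d₂ => a p.1 * b p.2) = 0)
    (μ₀ D₀ : Matrix (Fin d₁ × Fin d₂) (Fin d₁ × Fin d₂) ℂ)
    (hμ₀ : μ₀ = (m : ℂ)⁻¹ • ∑ k, outer (φ k))
    (hD₀ : D₀ = (N : ℂ)⁻¹ • 1)
    (ε : ℝ)
    (hε : ε / m = sInf ((fun σ => (Matrix.trace (μ₀ * σ)).re) '' SepSet d₁ d₂))
    (hεpos : 0 < ε) (hεsmall : N * ε / m < 1)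
    (s₀ : ℝ) (hs₀ : s₀ = 1 - ε * N / m)
    (p : Fin m → ℝ) (hp : ∀ k, 0 ≤ p k) (hpsum : ∑ k, p k = 1)
    (kmax : Fin m) (hkmax : ∀ k, p k ≤ p kmax)
    (μp : Matrix (Fin d₁ × Fin d₂) (Fin d₁ × Fin d₂) ℂ)
    (hμp : μp = ∑ k, (p k : ℂ) • outer (φ k))
    (b : ℝ) (hb : b = (p kmax)⁻¹)
    (ρp : Matrix (Fin d₁ × Fin d₂) (Fin d₁ × Fin d₂) ℂ)
    (hρp : ρp = ((N : ℂ) - (b : ℂ))⁻¹ • (1 - (b : ℂ) • μp)) :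
    ∀ t : ℝ, s₀ * ((N * p kmax - 1) / ((N : ℝ) / m - 1)) < t → t ≤ 1 →
      (((1 : ℂ) - (t : ℂ)) • D₀ + (t : ℂ) • ρp) ∉ SepSet d₁ d₂ ∧
      (ptrans (((1 : ℂ) - (t : ℂ)) • D₀ + (t : ℂ) • ρp)).PosSemidef := by
  
  intro t ht1 ht2
  -- basic real facts
  have hmR : (0:ℝ) < m := by exact_mod_cast hm0
  have hNm : (m:ℝ) < N := by exact_mod_cast hm
  have hNR : (0:ℝ) < N := lt_trans hmR hNm
  have hpmlb : 1 ≤ (m:ℝ) * p kmax := by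
    calc (1:ℝ) = ∑ k, p k := hpsum.symm
    _ ≤ ∑ _k : Fin m, p kmax := Finset.sum_le_sum fun k _ => hkmax k
    _ = m * p kmax := by simp [Finset.sum_const, Finset.card_univ, nsmul_eq_mul]
  have hpm : 0 < p kmax := by nlinarith
  have hbpos : 0 < b := by rw [hb]; positivity
  have hbpm : b * p kmax = 1 := by rw [hb]; field_simp
  have hbm : b ≤ m := by nlinarith
  have hNb : 0 < (N:ℝ) - b := by linarith
  have hs0 : 0 < s₀ := by
    have h : ε * N / m = N * ε / m := by ring
    rw [hs₀, h]; linarith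
  have hNmpos : 0 < (N:ℝ)/m - 1 := sub_pos.mpr ((one_lt_div hmR).mpr hNm)
  have hNpm1 : 0 < (N:ℝ) * p kmax - 1 := by
    have h1 : (N:ℝ)/m ≤ N * p kmax := by
      rw [div_le_iff₀ hmR]; nlinarith
    have h2 : (1:ℝ) < (N:ℝ)/m := (one_lt_div hmR).mpr hNm
    linarith
  have ht0 : 0 < t := by
    have := mul_pos hs0 (div_pos hNpm1 hNmpos)
    linarith
  -- key inequality
  have h3 : s₀ * ((N:ℝ) * p kmax - 1) < t * ((N:ℝ)/m - 1) :=
    (div_lt_iff₀ hNmpos).mp (by rwa [← mul_div_assoc] at ht1)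
  have hkey : s₀ * (m:ℝ) * ((N:ℝ) - b) < t * (b * ((N:ℝ) - m)) := by
    have h4 : s₀ * ((N:ℝ) * p kmax - 1) * ((m:ℝ) * b) < t * ((N:ℝ)/m - 1) * ((m:ℝ) * b) :=
      mul_lt_mul_of_pos_right h3 (mul_pos hmR hbpos)
    have e4 : t * (((N:ℝ)/m - 1) * ((m:ℝ) * b)) = t * (b * ((N:ℝ) - m)) := by
      field_simp
    have e5 : s₀ * ((N:ℝ) * p kmax - 1) * ((m:ℝ) * b) = s₀ * (m:ℝ) * ((N:ℝ) - b) := by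
      linear_combination s₀ * (m:ℝ) * (N:ℝ) * hbpm
    rw [← e4, ← mul_assoc]
    linarith
  have hεm : ε * (N:ℝ) = (1 - s₀) * m := by
    rw [hs₀]; field_simp; ring
  set ft : ℝ := (1-t) * ((N:ℝ))⁻¹ + t * ((((N:ℝ) - b))⁻¹ * (1 - b * ((m:ℝ))⁻¹)) with hft
  have hmain : ft < ε / m := by
    have hfrac : ft = ((1-t) * m * ((N:ℝ)-b) + t * N * ((m:ℝ)-b)) / ((m:ℝ) * N * ((N:ℝ)-b)) := by
      rw [hft]; field_simp
    have hem : ε / (m:ℝ) = (1-s₀)/N := by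
      rw [div_eq_div_iff hmR.ne' hNR.ne']; linarith
    rw [hfrac, hem, div_lt_div_iff₀ (by positivity) hNR]
    linarith [mul_lt_mul_of_pos_left hkey hNR]
  -- nonnegativity of the witness functional on SepSet
  have key0 : ∀ x : Fin d₁ × Fin d₂ → ℂ, 0 ≤ (Matrix.trace (μ₀ * outer x)).re := by
    intro x
    rw [hμ₀, smul_mul_assoc, Finset.sum_mul, trace_smul, trace_sum]
    have h : ∀ k ∈ Finset.univ, trace (outer (φ k) * outer x)
        = (star (φ k) ⬝ᵥ x) * star (star (φ k) ⬝ᵥ x) := fun k _ => by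
      rw [trace_outer_mul_outer, star_dot]
    rw [Finset.sum_congr rfl h, smul_eq_mul]
    have hm' : (m:ℂ)⁻¹ = (((m:ℝ)⁻¹ : ℝ) : ℂ) := by push_cast; ring
    rw [hm', Complex.mul_re, Complex.ofReal_re, Complex.ofReal_im, zero_mul, sub_zero, Complex.re_sum]
    apply mul_nonneg (by positivity)
    apply Finset.sum_nonneg
    intro k _
    rw [Complex.star_def, Complex.mul_conj, Complex.ofReal_re]
    exact Complex.normSq_nonneg _
  have hL : ∀ σ ∈ SepSet d₁ d₂, 0 ≤ (Matrix.trace (μ₀ * σ)).re := by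
    have hlin : IsLinearMap ℝ
        (fun σ : Matrix (Fin d₁ × Fin d₂) (Fin d₁ × Fin d₂) ℂ => (Matrix.trace (μ₀ * σ)).re) := by
      constructor
      · intro x y; simp [mul_add, trace_add]
      · intro r x
        rw [Matrix.mul_smul, trace_smul, Complex.smul_re]
    intro σ hσ
    have hsub : SepSet d₁ d₂ ⊆ {σ | 0 ≤ (Matrix.trace (μ₀ * σ)).re} := by
      apply convexHull_min ?_ (convex_halfSpace_ge hlin 0)
      rintro M ⟨a, bb, -, -, rfl⟩
      exact key0 _
    exact hsub hσ
  -- trace computations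
  have trμ0 : trace μ₀ = 1 := by
    rw [hμ₀, trace_smul, trace_sum]
    have h : ∀ k ∈ Finset.univ, trace (outer (φ k)) = (1:ℂ) := fun k _ => by
      rw [trace_outer]
      simpa using horth k k
    rw [Finset.sum_congr rfl h]
    simp
    rw [inv_mul_cancel₀]
    exact_mod_cast hmR.ne'
  have tr1 : ∀ l, trace (μ₀ * outer (φ l)) = (m:ℂ)⁻¹ := by
    intro l
    rw [hμ₀, smul_mul_assoc, Finset.sum_mul, trace_smul, trace_sum]
    have h : ∀ k ∈ Finset.univ, trace (outer (φ k) * outer (φ l))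
        = if k = l then (1:ℂ) else 0 := by
      intro k _
      rw [trace_outer_mul_outer, horth, horth]
      by_cases hkl : k = l <;> simp [hkl]
    rw [Finset.sum_congr rfl h]
    simp
  have trμp : trace (μ₀ * μp) = (m:ℂ)⁻¹ := by
    rw [hμp, Finset.mul_sum, trace_sum]
    have h : ∀ k ∈ Finset.univ, trace (μ₀ * ((p k : ℂ) • outer (φ k)))
        = (p k : ℂ) * (m:ℂ)⁻¹ := fun k _ => by
      rw [Matrix.mul_smul, trace_smul, tr1, smul_eq_mul]
    rw [Finset.sum_congr rfl h, ← Finset.sum_mul]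
    have hs : ∑ k, ((p k : ℝ) : ℂ) = 1 := by
      rw [← Complex.ofReal_sum, hpsum, Complex.ofReal_one]
    rw [hs, one_mul]
  have trD : trace (μ₀ * D₀) = (N:ℂ)⁻¹ := by
    rw [hD₀, Matrix.mul_smul, mul_one, trace_smul, trμ0, smul_eq_mul, mul_one]
  have trρ : trace (μ₀ * ρp) = ((N:ℂ) - b)⁻¹ * (1 - (b:ℂ) * (m:ℂ)⁻¹) := by
    rw [hρp, Matrix.mul_smul, trace_smul, mul_sub, mul_one, Matrix.mul_smul,
      trace_sub, trace_smul, trμ0, trμp, smul_eq_mul, smul_eq_mul]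
  have trtot : trace (μ₀ * (((1:ℂ) - t) • D₀ + (t:ℂ) • ρp))
      = ((ft : ℝ) : ℂ) := by
    rw [mul_add, trace_add, Matrix.mul_smul, Matrix.mul_smul, trace_smul, trace_smul,
      trD, trρ, smul_eq_mul, smul_eq_mul, hft]
    push_cast
    ring
  constructor
  · intro hsep
    have hlow : ε / m ≤ (Matrix.trace (μ₀ * (((1:ℂ) - t) • D₀ + (t:ℂ) • ρp))).re := by
      rw [hε]
      apply csInf_le
      · refine ⟨0, ?_⟩
        rintro y ⟨σ, hσ, rfl⟩
        exact hL σ hσ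
      · exact ⟨_, hsep, rfl⟩
    rw [trtot, Complex.ofReal_re] at hlow
    linarith
  · -- PPT part
    classical
    set ψ : Fin m → (Fin d₁ × Fin d₂ → ℂ) := fun k q => α k q.1 * star (β k q.2) with hψ
    have hψorth : ∀ k l, star (ψ k) ⬝ᵥ ψ l = if k = l then 1 else 0 := by
      intro k l
      have h2 : star (φ k) ⬝ᵥ φ l = (star (α k) ⬝ᵥ α l) * (star (β k) ⬝ᵥ β l) := by
        rw [hprod k, hprod l]; exact dot_factor _ _ _ _
      have hAC : (star (α k) ⬝ᵥ α l) * (star (β k) ⬝ᵥ β l) = if k = l then 1 else 0 :=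
        h2.symm.trans (horth k l)
      have h1' : star (ψ k) ⬝ᵥ ψ l
          = (star (α k) ⬝ᵥ α l) * star (star (β k) ⬝ᵥ β l) := by
        have hd : star (ψ k) ⬝ᵥ ψ l
            = (star (α k) ⬝ᵥ α l) * (star (star (β k)) ⬝ᵥ star (β l)) :=
          dot_factor (α k) (α l) (star (β k)) (star (β l))
        rw [hd]
        congr 1
        rw [star_star, star_dot]
        exact dotProduct_comm _ _
      by_cases hkl : k = l
      · subst hkl
        rw [if_pos rfl, h1', star_dot]
        simpa using hAC
      · rw [if_neg hkl, h1']
        rw [if_neg hkl] at hAC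
        rcases mul_eq_zero.mp hAC with hA | hC
        · rw [hA, zero_mul]
        · rw [hC, star_zero, mul_zero]
    have hψk : ∀ k, ptrans (outer (φ k)) = outer (ψ k) := fun k => by
      rw [hprod k]; exact ptrans_outer _ _
    set Q : Matrix (Fin d₁ × Fin d₂) (Fin d₁ × Fin d₂) ℂ := ∑ k, outer (ψ k) with hQdef
    have hQherm : Qᴴ = Q := by
      rw [hQdef, Matrix.conjTranspose_sum]
      exact Finset.sum_congr rfl fun k _ => outer_conjTranspose _
    have hQQ : Q * Q = Q := by
      calc Q * Q = ∑ k, ∑ l, (if k = l then (1:ℂ) else 0)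
            • Matrix.vecMulVec (ψ k) (star (ψ l)) := by
            rw [hQdef, Finset.sum_mul]
            refine Finset.sum_congr rfl fun k _ => ?_
            rw [Finset.mul_sum]
            exact Finset.sum_congr rfl fun l _ => by rw [outer_mul_outer, hψorth]
        _ = ∑ k, outer (ψ k) := by
            refine Finset.sum_congr rfl fun k _ => ?_
            simp [ite_smul, outer]
        _ = Q := hQdef.symm
    have hPSD1 : (1 - Q).PosSemidef := by
      have hc : (1 - Q)ᴴ = 1 - Q := by
        rw [Matrix.conjTranspose_sub, Matrix.conjTranspose_one, hQherm]
      have h2 : (1 - Q) * (1 - Q) = 1 - Q := by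
        have expand : (1 - Q) * (1 - Q) = 1 - Q - Q + Q * Q := by noncomm_ring
        rw [expand, hQQ]; abel
      have := Matrix.posSemidef_conjTranspose_mul_self (1 - Q)
      rwa [hc, h2] at this
    set e : ℝ := (1 - t) * ((N:ℝ))⁻¹ + t * (((N:ℝ) - b))⁻¹ with he
    set c : Fin m → ℝ := fun k => t * (((N:ℝ) - b))⁻¹ * b * p k with hcdef
    have hepos : 0 ≤ e := by
      rw [he]
      have h1 : (0:ℝ) ≤ (1 - t) * ((N:ℝ))⁻¹ := mul_nonneg (by linarith) (by positivity)
      have h2 : (0:ℝ) ≤ t * (((N:ℝ) - b))⁻¹ := mul_nonneg ht0.le (by positivity)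
      linarith
    have heck : ∀ k, 0 ≤ e - c k := by
      intro k
      have hbk : b * p k ≤ 1 := by
        calc b * p k ≤ b * p kmax := mul_le_mul_of_nonneg_left (hkmax k) hbpos.le
          _ = 1 := hbpm
      have h1 : c k ≤ t * (((N:ℝ) - b))⁻¹ := by
        rw [hcdef]
        calc t * (((N:ℝ) - b))⁻¹ * b * p k = t * (((N:ℝ) - b))⁻¹ * (b * p k) := by ring
          _ ≤ t * (((N:ℝ) - b))⁻¹ * 1 :=
            mul_le_mul_of_nonneg_left hbk (mul_nonneg ht0.le (by positivity))
          _ = t * (((N:ℝ) - b))⁻¹ := mul_one _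
      have h2 : (0:ℝ) ≤ (1 - t) * ((N:ℝ))⁻¹ := mul_nonneg (by linarith) (by positivity)
      rw [he]; linarith
    have hPT : ptrans (((1:ℂ) - t) • D₀ + (t:ℂ) • ρp)
        = ((1:ℂ) - t) • ((N:ℂ)⁻¹ • 1)
          + (t:ℂ) • (((N:ℂ) - b)⁻¹ • (1 - (b:ℂ) • ∑ k, (p k : ℂ) • outer (ψ k))) := by
      rw [hD₀, hρp, hμp]
      simp only [ptrans_add, ptrans_smul, ptrans_sub, ptrans_one, ptrans_sum, hψk]
    have hcoef1 : ((1:ℂ) - t) * (N:ℂ)⁻¹ + (t:ℂ) * ((N:ℂ) - b)⁻¹ = ((e : ℝ) : ℂ) := by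
      rw [he]; push_cast; ring
    have hcoef2 : ∀ k, (t:ℂ) * ((N:ℂ) - b)⁻¹ * (b:ℂ) * (p k : ℂ) = ((c k : ℝ) : ℂ) := by
      intro k; rw [hcdef]; push_cast; ring
    have hdecomp : ptrans (((1:ℂ) - t) • D₀ + (t:ℂ) • ρp)
        = ((e : ℝ) : ℂ) • (1 - Q) + ∑ k, (((e - c k : ℝ)) : ℂ) • outer (ψ k) := by
      rw [hPT]
      have hLHS : ((1:ℂ) - t) • ((N:ℂ)⁻¹ • (1 : Matrix (Fin d₁ × Fin d₂) (Fin d₁ × Fin d₂) ℂ))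
          + (t:ℂ) • (((N:ℂ) - b)⁻¹ • (1 - (b:ℂ) • ∑ k, (p k : ℂ) • outer (ψ k)))
          = ((e : ℝ) : ℂ) • 1 - ∑ k, ((c k : ℝ) : ℂ) • outer (ψ k) := by
        rw [smul_smul, smul_smul, smul_sub, smul_smul, ← hcoef1, add_smul]
        rw [Finset.smul_sum]
        have hterm : ∀ k ∈ Finset.univ, ((t:ℂ) * ((N:ℂ) - b)⁻¹ * (b:ℂ)) • ((p k : ℂ) • outer (ψ k))
            = ((c k : ℝ) : ℂ) • outer (ψ k) := fun k _ => by
          rw [smul_smul, hcoef2 k]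
        rw [Finset.sum_congr rfl hterm]
        abel
      have hRHS : ((e : ℝ) : ℂ) • (1 - Q) + ∑ k, (((e - c k : ℝ)) : ℂ) • outer (ψ k)
          = ((e : ℝ) : ℂ) • 1 - ∑ k, ((c k : ℝ) : ℂ) • outer (ψ k) := by
        have hterm : ∀ k ∈ Finset.univ, (((e - c k : ℝ)) : ℂ) • outer (ψ k)
            = ((e : ℝ) : ℂ) • outer (ψ k) - ((c k : ℝ) : ℂ) • outer (ψ k) := fun k _ => by
          rw [← sub_smul]; norm_cast
        rw [Finset.sum_congr rfl hterm, Finset.sum_sub_distrib, smul_sub, hQdef, Finset.smul_sum]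
        abel
      rw [hLHS, hRHS]
    rw [hdecomp]
    apply Matrix.PosSemidef.add
    · exact posSemidef_real_smul hPSD1 hepos
    · refine Finset.sum_induction _ _ (fun a b ha hb => ha.add hb) posSemidef_zero ?_
      exact fun k _ => posSemidef_real_smul (posSemidef_outer _) (heck k)
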